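/- Let G and G' be vertex-disjoint bipartite graphs with bipartitions {A,B} and {A',B'}, all four parts nonempty, with G' the bipartite complement of an isomorphic copy of G, and assume neither G nor G' has isolated vertices. Let H be the graph on V(G) ∪ V(G') ∪ {c_1,c_2,d_1,d_2} with edges E(G) ∪ E(G') ∪ {c_1d_1, c_2d_2} ∪ {ad : a∈A, d∈{d_1,d_2}} ∪ {a'b : a'∈A', b∈B} ∪ {b'c : b'∈B', c∈{c_1,c_2}}. Then H is a bipartite square-complementary graph. -/

import Mathlib

open SimpleGraph

/-- The square of a graph: two distinct vertices are adjacent iff they are at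
distance at most 2 in `G`, i.e. adjacent or having a common neighbor. -/
def SimpleGraph.square {V : Type*} (G : SimpleGraph V) : SimpleGraph V where
  Adj u v := u ≠ v ∧ (G.Adj u v ∨ ∃ w, G.Adj u w ∧ G.Adj w v)
  symm := by
    constructor
    rintro u v ⟨h, h' | ⟨w, hw1, hw2⟩⟩
    · exact ⟨h.symm, Or.inl h'.symm⟩
    · exact ⟨h.symm, Or.inr ⟨w, hw2.symm, hw1.symm⟩⟩
  loopless := by constructor; rintro v ⟨h, -⟩; exact h rfl

/-- A graph is square-complementary (squco) if its square is isomorphic to its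
complement. -/
def SimpleGraph.IsSquco {V : Type*} (G : SimpleGraph V) : Prop :=
  Nonempty (G.square ≃g Gᶜ)

/-- `{A, B}` is a bipartition of `G`: the two sets partition the vertex set and
every edge of `G` joins a vertex of `A` to a vertex of `B`. -/
def SimpleGraph.IsBipartitionOf {V : Type*} (G : SimpleGraph V) (A B : Set V) : Prop :=
  (∀ v, v ∈ A ↔ v ∉ B) ∧ ∀ ⦃u v⦄, G.Adj u v → (u ∈ A ∧ v ∈ B) ∨ (u ∈ B ∧ v ∈ A)

/-- The bipartite complement of `G` with respect to the bipartition `{A, B}`: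
its edges are exactly the non-edges of `G` joining `A` and `B`. -/
def SimpleGraph.bipCompl {V : Type*} (G : SimpleGraph V) (A B : Set V) : SimpleGraph V where
  Adj u v := u ≠ v ∧ ((u ∈ A ∧ v ∈ B) ∨ (u ∈ B ∧ v ∈ A)) ∧ ¬ G.Adj u v
  symm := by
    constructor
    rintro u v ⟨hne, hAB | hBA, hn⟩
    · exact ⟨hne.symm, Or.inr ⟨hAB.2, hAB.1⟩, fun h => hn h.symm⟩
    · exact ⟨hne.symm, Or.inl ⟨hBA.2, hBA.1⟩, fun h => hn h.symm⟩
  loopless := by constructor; rintro v ⟨h, -⟩; exact h rfl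

/-- Auxiliary (asymmetric) edge relation for the construction `H(G, G')`:
on top of the edges of `G` and `G'` we add the two edges `c₁d₁`, `c₂d₂`, all
edges between `A` and `D = {d₁, d₂}`, all edges between `A'` and `B`, and all
edges between `B'` and `C = {c₁, c₂}`.  In the vertex type, `Sum.inr (Sum.inl i)`
is `c_{i+1}` and `Sum.inr (Sum.inr j)` is `d_{j+1}`. -/
def hRel {V V' : Type*} (G : SimpleGraph V) (G' : SimpleGraph V')
    (A : Set V) (B : Set V) (A' : Set V') (B' : Set V') :
    (V ⊕ V') ⊕ (Fin 2 ⊕ Fin 2) → (V ⊕ V') ⊕ (Fin 2 ⊕ Fin 2) → Prop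
  | .inl (.inl u), .inl (.inl v) => G.Adj u v
  | .inl (.inr u), .inl (.inr v) => G'.Adj u v
  | .inr (.inl i), .inr (.inr j) => i = j
  | .inl (.inl a), .inr (.inr _) => a ∈ A
  | .inl (.inr a'), .inl (.inl b) => a' ∈ A' ∧ b ∈ B
  | .inl (.inr b'), .inr (.inl _) => b' ∈ B'
  | _, _ => False

/-- The construction `H(G, G')` as a simple graph. -/
def Hgraph {V V' : Type*} (G : SimpleGraph V) (G' : SimpleGraph V')
    (A : Set V) (B : Set V) (A' : Set V') (B' : Set V') :
    SimpleGraph ((V ⊕ V') ⊕ (Fin 2 ⊕ Fin 2)) where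
  Adj x y := x ≠ y ∧ (hRel G G' A B A' B' x y ∨ hRel G G' A B A' B' y x)
  symm := by constructor; rintro x y ⟨h, h'⟩; exact ⟨h.symm, h'.symm⟩
  loopless := by constructor; rintro x ⟨h, -⟩; exact h rfl

namespace SqucoAux
variable {V V' : Type*} {G : SimpleGraph V} {G' : SimpleGraph V'}
  {A B : Set V} {A' B' : Set V'}

def sideP (A : Set V) (A' : Set V') : (V ⊕ V') ⊕ (Fin 2 ⊕ Fin 2) → Prop
  | .inl (.inl v) => v ∈ A
  | .inl (.inr v) => v ∈ A'
  | .inr (.inl _) => True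
  | .inr (.inr _) => False

lemma adj_vv {u v : V} :
    (Hgraph G G' A B A' B').Adj (.inl (.inl u)) (.inl (.inl v)) ↔ G.Adj u v :=
  ⟨fun h => h.2.elim (fun h' => h') (fun h' => G.adj_symm h'),
   fun h => ⟨by simpa using h.ne, Or.inl h⟩⟩

lemma adj_v'v' {u v : V'} :
    (Hgraph G G' A B A' B').Adj (.inl (.inr u)) (.inl (.inr v)) ↔ G'.Adj u v :=
  ⟨fun h => h.2.elim (fun h' => h') (fun h' => G'.adj_symm h'),
   fun h => ⟨by simpa using h.ne, Or.inl h⟩⟩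

lemma adj_vv' {u : V} {v : V'} :
    (Hgraph G G' A B A' B').Adj (.inl (.inl u)) (.inl (.inr v)) ↔ (v ∈ A' ∧ u ∈ B) :=
  ⟨fun h => h.2.elim (fun h' => False.elim h') (fun h' => h'),
   fun h => ⟨by simp, Or.inr h⟩⟩

lemma adj_cd {i j : Fin 2} :
    (Hgraph G G' A B A' B').Adj (.inr (.inl i)) (.inr (.inr j)) ↔ i = j :=
  ⟨fun h => h.2.elim (fun h' => h') (fun h' => False.elim h'),
   fun h => ⟨by simp, Or.inl h⟩⟩

lemma adj_vd {u : V} {j : Fin 2} :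
    (Hgraph G G' A B A' B').Adj (.inl (.inl u)) (.inr (.inr j)) ↔ u ∈ A :=
  ⟨fun h => h.2.elim (fun h' => h') (fun h' => False.elim h'),
   fun h => ⟨by simp, Or.inl h⟩⟩

lemma adj_v'c {u : V'} {i : Fin 2} :
    (Hgraph G G' A B A' B').Adj (.inl (.inr u)) (.inr (.inl i)) ↔ u ∈ B' :=
  ⟨fun h => h.2.elim (fun h' => h') (fun h' => False.elim h'),
   fun h => ⟨by simp, Or.inl h⟩⟩

lemma adj_vc {u : V} {i : Fin 2} :
    ¬ (Hgraph G G' A B A' B').Adj (.inl (.inl u)) (.inr (.inl i)) :=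
  fun h => h.2.elim (fun h' => h') (fun h' => h')

lemma adj_v'd {u : V'} {j : Fin 2} :
    ¬ (Hgraph G G' A B A' B').Adj (.inl (.inr u)) (.inr (.inr j)) :=
  fun h => h.2.elim (fun h' => h') (fun h' => h')

lemma adj_cc {i i' : Fin 2} :
    ¬ (Hgraph G G' A B A' B').Adj (.inr (.inl i)) (.inr (.inl i')) :=
  fun h => h.2.elim (fun h' => h') (fun h' => h')

lemma adj_dd {j j' : Fin 2} :
    ¬ (Hgraph G G' A B A' B').Adj (.inr (.inr j)) (.inr (.inr j')) :=
  fun h => h.2.elim (fun h' => h') (fun h' => h')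



lemma not_mem_B {v : V} (hbip : G.IsBipartitionOf A B) (h : v ∈ A) : v ∉ B :=
  (hbip.1 v).mp h

lemma not_mem_A {v : V} (hbip : G.IsBipartitionOf A B) (h : v ∈ B) : v ∉ A :=
  fun h' => (hbip.1 v).mp h' h

lemma mem_B_of {v : V} (hbip : G.IsBipartitionOf A B) (h : v ∉ A) : v ∈ B :=
  Classical.byContradiction fun h' => h ((hbip.1 v).mpr h')

lemma nbr_B (hbip : G.IsBipartitionOf A B) (hiso : ∀ v : V, ∃ u, G.Adj v u)
    {a : V} (ha : a ∈ A) : ∃ b ∈ B, G.Adj a b := by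
  obtain ⟨u, hu⟩ := hiso a
  rcases hbip.2 hu with ⟨h1, h2⟩ | ⟨h1, h2⟩
  · exact ⟨u, h2, hu⟩
  · exact absurd h1 (not_mem_B hbip ha)

lemma nbr_A (hbip : G.IsBipartitionOf A B) (hiso : ∀ v : V, ∃ u, G.Adj v u)
    {b : V} (hb : b ∈ B) : ∃ a ∈ A, G.Adj b a := by
  obtain ⟨u, hu⟩ := hiso b
  rcases hbip.2 hu with ⟨h1, h2⟩ | ⟨h1, h2⟩
  · exact absurd h1 (not_mem_A hbip hb)
  · exact ⟨u, h2, hu⟩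

lemma hrel_cross (hbip : G.IsBipartitionOf A B) (hbip' : G'.IsBipartitionOf A' B')
    {x y} (hr : hRel G G' A B A' B' x y) :
    (sideP A A' x ∧ ¬ sideP A A' y) ∨ (sideP A A' y ∧ ¬ sideP A A' x) := by
  obtain (u | u) | (i | j) := x <;> obtain (v | v) | (i' | j') := y
  · rcases hbip.2 (hr : G.Adj u v) with ⟨h1, h2⟩ | ⟨h1, h2⟩
    · exact Or.inl ⟨h1, not_mem_A hbip h2⟩
    · exact Or.inr ⟨h2, not_mem_A hbip h1⟩
  · exact False.elim hr
  · exact False.elim hr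
  · exact Or.inl ⟨(hr : u ∈ A), id⟩
  · exact Or.inl ⟨(hr : u ∈ A' ∧ v ∈ B).1, not_mem_A hbip (hr : u ∈ A' ∧ v ∈ B).2⟩
  · rcases hbip'.2 (hr : G'.Adj u v) with ⟨h1, h2⟩ | ⟨h1, h2⟩
    · exact Or.inl ⟨h1, not_mem_A hbip' h2⟩
    · exact Or.inr ⟨h2, not_mem_A hbip' h1⟩
  · exact Or.inr ⟨trivial, not_mem_A hbip' (hr : u ∈ B')⟩
  · exact False.elim hr
  · exact False.elim hr
  · exact False.elim hr
  · exact False.elim hr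
  · exact Or.inl ⟨trivial, id⟩
  · exact False.elim hr
  · exact False.elim hr
  · exact False.elim hr
  · exact False.elim hr

lemma adj_cross (hbip : G.IsBipartitionOf A B) (hbip' : G'.IsBipartitionOf A' B')
    {x y} (h : (Hgraph G G' A B A' B').Adj x y) :
    (sideP A A' x ∧ ¬ sideP A A' y) ∨ (sideP A A' y ∧ ¬ sideP A A' x) := by
  rcases h.2 with hr | hr
  · exact hrel_cross hbip hbip' hr
  · exact (hrel_cross hbip hbip' hr).symm


lemma common_nbr (hbip : G.IsBipartitionOf A B) (hbip' : G'.IsBipartitionOf A' B')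
    (hA : A.Nonempty) (hB : B.Nonempty) (hA' : A'.Nonempty) (hB' : B'.Nonempty)
    (hiso : ∀ v : V, ∃ u, G.Adj v u) (hiso' : ∀ v : V', ∃ u, G'.Adj v u)
    {x y} (hs : sideP A A' x ↔ sideP A A' y) :
    ∃ w, (Hgraph G G' A B A' B').Adj x w ∧ (Hgraph G G' A B A' B').Adj w y := by
  obtain (u | u) | (i | j) := x <;> obtain (v | v) | (i' | j') := y
  · -- ll, ll
    by_cases hu : u ∈ A
    · exact ⟨.inr (.inr 0), adj_vd.mpr hu, (adj_vd.mpr (hs.mp hu)).symm⟩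
    · have huB : u ∈ B := mem_B_of hbip hu
      have hvB : v ∈ B := mem_B_of hbip fun h => hu (hs.mpr h)
      obtain ⟨a', ha'⟩ := hA'
      exact ⟨.inl (.inr a'), adj_vv'.mpr ⟨ha', huB⟩, (adj_vv'.mpr ⟨ha', hvB⟩).symm⟩
  · -- ll, lr
    by_cases hu : u ∈ A
    · obtain ⟨b, hbB, hab⟩ := nbr_B hbip hiso hu
      exact ⟨.inl (.inl b), adj_vv.mpr hab, adj_vv'.mpr ⟨hs.mp hu, hbB⟩⟩
    · have huB : u ∈ B := mem_B_of hbip hu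
      have hvB' : v ∈ B' := mem_B_of hbip' fun h => hu (hs.mpr h)
      obtain ⟨a', ha'A', hadj⟩ := nbr_A hbip' hiso' hvB'
      exact ⟨.inl (.inr a'), adj_vv'.mpr ⟨ha'A', huB⟩, adj_v'v'.mpr hadj.symm⟩
  · -- ll, rl
    exact ⟨.inr (.inr i'), adj_vd.mpr (hs.mpr trivial), (adj_cd.mpr rfl).symm⟩
  · -- ll, rr
    have huB : u ∈ B := mem_B_of hbip fun h => hs.mp h
    obtain ⟨a, haA, hadj⟩ := nbr_A hbip hiso huB
    exact ⟨.inl (.inl a), adj_vv.mpr hadj, adj_vd.mpr haA⟩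
  · -- lr, ll
    by_cases hu : u ∈ A'
    · obtain ⟨b, hbB, hadj⟩ := nbr_B hbip hiso (hs.mp hu)
      exact ⟨.inl (.inl b), (adj_vv'.mpr ⟨hu, hbB⟩).symm, adj_vv.mpr hadj.symm⟩
    · have huB' : u ∈ B' := mem_B_of hbip' hu
      have hvB : v ∈ B := mem_B_of hbip fun h => hu (hs.mpr h)
      obtain ⟨a', ha'A', hadj⟩ := nbr_A hbip' hiso' huB'
      exact ⟨.inl (.inr a'), adj_v'v'.mpr hadj, (adj_vv'.mpr ⟨ha'A', hvB⟩).symm⟩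
  · -- lr, lr
    by_cases hu : u ∈ A'
    · obtain ⟨b, hbB⟩ := hB
      exact ⟨.inl (.inl b), (adj_vv'.mpr ⟨hu, hbB⟩).symm, adj_vv'.mpr ⟨hs.mp hu, hbB⟩⟩
    · have huB' : u ∈ B' := mem_B_of hbip' hu
      have hvB' : v ∈ B' := mem_B_of hbip' fun h => hu (hs.mpr h)
      exact ⟨.inr (.inl 0), adj_v'c.mpr huB', (adj_v'c.mpr hvB').symm⟩
  · -- lr, rl
    obtain ⟨b', hb'B', hadj⟩ := nbr_B hbip' hiso' (hs.mpr trivial)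
    exact ⟨.inl (.inr b'), adj_v'v'.mpr hadj, adj_v'c.mpr hb'B'⟩
  · -- lr, rr
    have huB' : u ∈ B' := mem_B_of hbip' fun h => hs.mp h
    exact ⟨.inr (.inl j'), adj_v'c.mpr huB', adj_cd.mpr rfl⟩
  · -- rl, ll
    exact ⟨.inr (.inr i), adj_cd.mpr rfl, (adj_vd.mpr (hs.mp trivial)).symm⟩
  · -- rl, lr
    obtain ⟨b', hb'B', hadj⟩ := nbr_B hbip' hiso' (hs.mp trivial)
    exact ⟨.inl (.inr b'), (adj_v'c.mpr hb'B').symm, adj_v'v'.mpr hadj.symm⟩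
  · -- rl, rl
    obtain ⟨b', hb'⟩ := hB'
    exact ⟨.inl (.inr b'), (adj_v'c.mpr hb').symm, adj_v'c.mpr hb'⟩
  · -- rl, rr
    exact absurd (hs.mp trivial) id
  · -- rr, ll
    have hvB : v ∈ B := mem_B_of hbip fun h => hs.mpr h
    obtain ⟨a, haA, hadj⟩ := nbr_A hbip hiso hvB
    exact ⟨.inl (.inl a), (adj_vd.mpr haA).symm, adj_vv.mpr hadj.symm⟩
  · -- rr, lr
    have hvB' : v ∈ B' := mem_B_of hbip' fun h => hs.mpr h
    exact ⟨.inr (.inl j), (adj_cd.mpr rfl).symm, (adj_v'c.mpr hvB').symm⟩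
  · -- rr, rl
    exact absurd (hs.mpr trivial) id
  · -- rr, rr
    obtain ⟨a, ha⟩ := hA
    exact ⟨.inl (.inl a), (adj_vd.mpr ha).symm, adj_vd.mpr ha⟩


def phiF (e : V ≃ V') : (V ⊕ V') ⊕ (Fin 2 ⊕ Fin 2) → (V ⊕ V') ⊕ (Fin 2 ⊕ Fin 2)
  | .inl (.inl v) => .inl (.inr (e v))
  | .inl (.inr v) => .inl (.inl (e.symm v))
  | .inr (.inl i) => .inr (.inl (i + 1))
  | .inr (.inr j) => .inr (.inr j)

lemma phiF_invol (e : V ≃ V') : ∀ x, phiF e (phiF e x) = x := by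
  rintro ((v | v) | (i | j))
  · simp [phiF]
  · simp [phiF]
  · show _ = ((Sum.inr (Sum.inl i)) : (V ⊕ V') ⊕ (Fin 2 ⊕ Fin 2))
    simp only [phiF]
    congr 2
    revert i; decide
  · rfl

lemma sideP_phi (e : V ≃ V') (he : ∀ v, v ∈ A ↔ e v ∈ A') :
    ∀ x, (sideP A A' (phiF e x) ↔ sideP A A' x) := by
  rintro ((v | v) | (i | j))
  · exact (he v).symm
  · show e.symm v ∈ A ↔ v ∈ A'
    rw [he (e.symm v), e.apply_symm_apply]
  · exact Iff.rfl
  · exact Iff.rfl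

lemma memB_iff (hbip : G.IsBipartitionOf A B) (hbip' : G'.IsBipartitionOf A' B')
    (e : V ≃ V') (he : ∀ v, v ∈ A ↔ e v ∈ A') (v : V) : v ∈ B ↔ e v ∈ B' :=
  ⟨fun h => mem_B_of hbip' fun h' => not_mem_A hbip h ((he v).mpr h'),
   fun h => mem_B_of hbip fun h' => not_mem_A hbip' h ((he v).mp h')⟩


lemma core (hbip : G.IsBipartitionOf A B) (hbip' : G'.IsBipartitionOf A' B')
    (e : V ≃ V') (he : ∀ v, v ∈ A ↔ e v ∈ A')
    (he2 : ∀ u v, G'.Adj (e u) (e v) ↔ (G.bipCompl A B).Adj u v)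
    {x y} (hx : sideP A A' x) (hy : ¬ sideP A A' y) :
    (Hgraph G G' A B A' B').Adj x y ↔
      ¬ (Hgraph G G' A B A' B').Adj (phiF e x) (phiF e y) := by
  obtain (a | a) | (i | j) := x <;> obtain (b | b) | (i' | j') := y <;>
    simp only [phiF] <;>
    first
    | exact absurd trivial hy
    | exact absurd hx id
    | skip
  · -- x = a ∈ A, y = b ∈ B
    have hbB : b ∈ B := mem_B_of hbip hy
    have hab : a ≠ b := fun h => not_mem_B hbip hx (h ▸ hbB)
    rw [adj_vv, adj_v'v', he2]
    constructor
    · rintro h ⟨-, -, hn⟩; exact hn h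
    · intro h
      by_contra hn
      exact h ⟨hab, Or.inl ⟨hx, hbB⟩, hn⟩
  · -- x = a ∈ A, y = b' ∈ B'
    have hbB' : b ∈ B' := mem_B_of hbip' hy
    rw [adj_vv', SimpleGraph.adj_comm, adj_vv']
    exact iff_of_false (fun h => not_mem_A hbip' hbB' h.1)
      (not_not_intro ⟨(he a).mp hx,
        (memB_iff hbip hbip' e he _).mpr (by simpa using hbB')⟩)
  · -- x = a ∈ A, y = d_j
    exact iff_of_true (adj_vd.mpr hx) adj_v'd
  · -- x = a' ∈ A', y = b ∈ B
    have hbB : b ∈ B := mem_B_of hbip hy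
    exact iff_of_true ((adj_vv'.mpr ⟨hx, hbB⟩).symm)
      (fun h => not_mem_A hbip hbB ((he b).mpr (adj_vv'.mp h).1))
  · -- x = a' ∈ A', y = b' ∈ B'
    have hbB' : b ∈ B' := mem_B_of hbip' hy
    have haA : e.symm a ∈ A := (he _).mpr (by rw [e.apply_symm_apply]; exact hx)
    have hbB : e.symm b ∈ B := (memB_iff hbip hbip' e he _).mpr (by simpa using hbB')
    have hne : e.symm a ≠ e.symm b := fun h => not_mem_B hbip haA (h ▸ hbB)
    have key := he2 (e.symm a) (e.symm b)
    simp only [e.apply_symm_apply] at key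
    rw [adj_v'v', adj_vv, key]
    constructor
    · rintro ⟨-, -, hn⟩; exact hn
    · intro h; exact ⟨hne, Or.inl ⟨haA, hbB⟩, h⟩
  · -- x = a' ∈ A', y = d_j
    have haA : e.symm a ∈ A := (he _).mpr (by rw [e.apply_symm_apply]; exact hx)
    exact iff_of_false adj_v'd (not_not_intro (adj_vd.mpr haA))
  · -- x = c_i, y = b ∈ B
    have hbB : b ∈ B := mem_B_of hbip hy
    exact iff_of_false (fun h => adj_vc h.symm)
      (not_not_intro ((adj_v'c.mpr ((memB_iff hbip hbip' e he b).mp hbB)).symm))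
  · -- x = c_i, y = b' ∈ B'
    have hbB' : b ∈ B' := mem_B_of hbip' hy
    exact iff_of_true ((adj_v'c.mpr hbB').symm) (fun h => adj_vc h.symm)
  · -- x = c_i, y = d_j
    rw [adj_cd, adj_cd]
    clear hx hy
    revert i j'; decide

lemma core' (hbip : G.IsBipartitionOf A B) (hbip' : G'.IsBipartitionOf A' B')
    (e : V ≃ V') (he : ∀ v, v ∈ A ↔ e v ∈ A')
    (he2 : ∀ u v, G'.Adj (e u) (e v) ↔ (G.bipCompl A B).Adj u v)
    {x y} (hs : ¬ (sideP A A' x ↔ sideP A A' y)) :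
    (Hgraph G G' A B A' B').Adj x y ↔
      ¬ (Hgraph G G' A B A' B').Adj (phiF e x) (phiF e y) := by
  by_cases hx : sideP A A' x
  · have hy : ¬ sideP A A' y := fun h => hs ⟨fun _ => h, fun _ => hx⟩
    exact core hbip hbip' e he he2 hx hy
  · have hy : sideP A A' y := Classical.byContradiction fun h =>
      hs ⟨fun h' => absurd h' hx, fun h' => absurd h' h⟩
    exact ((Hgraph G G' A B A' B').adj_comm x y).trans
      ((core hbip hbip' e he he2 hy hx).trans
        (not_congr ((Hgraph G G' A B A' B').adj_comm (phiF e y) (phiF e x))))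
end SqucoAux

/-- If `G` and `G'` are bipartite graphs with bipartitions `{A, B}` and
`{A', B'}`, all four parts nonempty, without isolated vertices, and `G'` is the
bipartite complement of an isomorphic copy of `G`, then `H(G, G')` is a
bipartite square-complementary graph. -/
theorem Hgraph_isSquco {V V' : Type*} [Fintype V] [Fintype V']
    (G : SimpleGraph V) (G' : SimpleGraph V')
    (A B : Set V) (A' B' : Set V')
    (hbip : G.IsBipartitionOf A B) (hbip' : G'.IsBipartitionOf A' B')
    (hA : A.Nonempty) (hB : B.Nonempty) (hA' : A'.Nonempty) (hB' : B'.Nonempty)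
    (hiso : ∀ v : V, ∃ u, G.Adj v u) (hiso' : ∀ v : V', ∃ u, G'.Adj v u)
    (hcompl : ∃ e : V ≃ V', (∀ v, v ∈ A ↔ e v ∈ A') ∧
      ∀ u v, G'.Adj (e u) (e v) ↔ (G.bipCompl A B).Adj u v) :
    (∃ X Y, (Hgraph G G' A B A' B').IsBipartitionOf X Y) ∧
      (Hgraph G G' A B A' B').IsSquco := by
  classical
  obtain ⟨e, he, he2⟩ := hcompl
  open SqucoAux in
  refine ⟨⟨{x | sideP A A' x}, {x | ¬ sideP A A' x},
    fun v => not_not.symm, fun u v h => by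
      simpa only [Set.mem_setOf_eq] using (adj_cross hbip hbip' h).imp id And.symm⟩, ?_⟩
  refine ⟨⟨⟨phiF e, phiF e, phiF_invol e, phiF_invol e⟩, @fun x y => ?_⟩⟩
  show (Hgraph G G' A B A' B')ᶜ.Adj (phiF e x) (phiF e y) ↔
    (Hgraph G G' A B A' B').square.Adj x y
  rw [SimpleGraph.compl_adj]
  constructor
  · rintro ⟨hne, hnadj⟩
    have hne' : x ≠ y := fun h => hne (by rw [h])
    refine ⟨hne', ?_⟩
    by_cases hs : sideP A A' x ↔ sideP A A' y
    · obtain ⟨w, h1, h2⟩ := common_nbr hbip hbip' hA hB hA' hB' hiso hiso' hs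
      exact Or.inr ⟨w, h1, h2⟩
    · exact Or.inl ((core' hbip hbip' e he he2 hs).mpr hnadj)
  · rintro ⟨hne, h⟩
    have hinj : phiF e x ≠ phiF e y := fun h' => hne (by
      have h'' := congrArg (phiF e) h'
      rwa [phiF_invol, phiF_invol] at h'')
    refine ⟨hinj, ?_⟩
    rcases h with hadj | ⟨w, h1, h2⟩
    · have hs : ¬ (sideP A A' x ↔ sideP A A' y) := by
        rcases adj_cross hbip hbip' hadj with ⟨ha1, ha2⟩ | ⟨ha1, ha2⟩
        · exact fun hiff => ha2 (hiff.mp ha1)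
        · exact fun hiff => ha2 (hiff.mpr ha1)
      exact (core' hbip hbip' e he he2 hs).mp hadj
    · have hsx := adj_cross hbip hbip' h1
      have hsy := adj_cross hbip hbip' h2
      have hs : sideP A A' x ↔ sideP A A' y := by tauto
      intro hadj'
      have hcross := adj_cross hbip hbip' hadj'
      have e1 := sideP_phi e he x
      have e2 := sideP_phi e he y
      tauto
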